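/- arXiv:1908.07946 — 3 statements merged into one kernel-verified Lean document; each statement's English description precedes it below -/
import Mathlib

section
/- Let G be a group acting on sets Ω and Ω', and let φ : Q[Ω] → Q[Ω'] be a G-equivariant linear map between the permutation modules. If Ω has finitely many G-orbits, then φ is bounded with respect to the ℓ1-norms: there exists C > 0 such that ‖φ(x)‖₁ ≤ C‖x‖₁ for all x ∈ Q[Ω]. -/
/-- The ℓ1-norm on the free ℚ-vector space `Ω →₀ ℚ` on a set `Ω`. -/
def l1 {Ω : Type*} (x : Ω →₀ ℚ) : ℚ := x.sum fun _ a => |a|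

lemma l1_nonneg {Ω : Type*} (x : Ω →₀ ℚ) : 0 ≤ l1 x :=
  Finset.sum_nonneg fun _ _ => abs_nonneg _

lemma l1_eq_sum {Ω : Type*} (x : Ω →₀ ℚ) {s : Finset Ω} (hs : x.support ⊆ s) :
    l1 x = ∑ a ∈ s, |x a| :=
  Finsupp.sum_of_support_subset x hs _ (fun _ _ => abs_zero)

lemma l1_add_le {Ω : Type*} (x y : Ω →₀ ℚ) : l1 (x + y) ≤ l1 x + l1 y := by
  classical
  rw [l1_eq_sum (x + y) (s := x.support ∪ y.support) (Finsupp.support_add),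
    l1_eq_sum x (Finset.subset_union_left),
    l1_eq_sum y (Finset.subset_union_right), ← Finset.sum_add_distrib]
  exact Finset.sum_le_sum fun a _ => by simpa using abs_add_le (x a) (y a)

lemma l1_single {Ω : Type*} (a : Ω) (b : ℚ) : l1 (Finsupp.single a b) = |b| := by
  simp [l1, Finsupp.sum_single_index, abs_zero]

lemma l1_smul {Ω : Type*} (c : ℚ) (x : Ω →₀ ℚ) : l1 (c • x) = |c| * l1 x := by
  unfold l1
  rw [Finsupp.sum_smul_index (fun _ => abs_zero), Finsupp.mul_sum]
  exact Finsupp.sum_congr fun a _ => abs_mul c (x a)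

lemma l1_mapDomain {Ω Ω' : Type*} (f : Ω → Ω') (hf : Function.Injective f)
    (x : Ω →₀ ℚ) : l1 (Finsupp.mapDomain f x) = l1 x :=
  Finsupp.sum_mapDomain_index_inj hf

lemma l1_single_add {Ω : Type*} (a : Ω) (b : ℚ) (f : Ω →₀ ℚ) (ha : a ∉ f.support) :
    l1 (Finsupp.single a b + f) = |b| + l1 f := by
  classical
  rcases eq_or_ne b 0 with rfl | hb
  · simp [l1_eq_sum]
  · have hd : Disjoint (Finsupp.single a b).support f.support := by
      rw [Finsupp.support_single_ne_zero a hb]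
      simpa using ha
    have hsupp := Finsupp.support_add_eq hd
    rw [l1_eq_sum (Finsupp.single a b + f) (Finsupp.support_add), Finset.sum_union hd]
    have h1 : ∑ x ∈ (Finsupp.single a b).support, |(Finsupp.single a b + f) x| = |b| := by
      rw [Finsupp.support_single_ne_zero a hb]
      have : f a = 0 := Finsupp.notMem_support_iff.mp ha
      simp [this]
    have h2 : ∑ x ∈ f.support, |(Finsupp.single a b + f) x| = l1 f := by
      rw [l1_eq_sum f subset_rfl]
      refine Finset.sum_congr rfl fun x hx => ?_
      have : (Finsupp.single a b) x = 0 := by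
        apply Finsupp.single_eq_of_ne
        rintro rfl; exact ha hx
      simp [this]
    rw [h1, h2]

/-- A `G`-equivariant linear map between permutation modules `ℚ[Ω] → ℚ[Ω']` is bounded
with respect to the ℓ1-norms, provided `Ω` has finitely many `G`-orbits. -/
theorem stmt1 {G Ω Ω' : Type*} [Group G] [MulAction G Ω] [MulAction G Ω']
    (φ : (Ω →₀ ℚ) →ₗ[ℚ] (Ω' →₀ ℚ))
    (hφ : ∀ (g : G) (x : Ω →₀ ℚ),
      φ (Finsupp.mapDomain (g • ·) x) = Finsupp.mapDomain (g • ·) (φ x))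
    (horb : ∃ S : Finset Ω, ∀ ω : Ω, ∃ s ∈ S, ∃ g : G, g • s = ω) :
    ∃ C : ℚ, 0 < C ∧ ∀ x : Ω →₀ ℚ, l1 (φ x) ≤ C * l1 x := by
  obtain ⟨S, hS⟩ := horb
  set C : ℚ := 1 + ∑ s ∈ S, l1 (φ (Finsupp.single s 1)) with hC
  have hCpos : 0 < C := by
    have : 0 ≤ ∑ s ∈ S, l1 (φ (Finsupp.single s 1)) :=
      Finset.sum_nonneg fun _ _ => l1_nonneg _
    linarith
  have hbound : ∀ ω : Ω, l1 (φ (Finsupp.single ω 1)) ≤ C := by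
    intro ω
    obtain ⟨s, hsS, g, hgs⟩ := hS ω
    have key : φ (Finsupp.single ω 1) = Finsupp.mapDomain (g • ·) (φ (Finsupp.single s 1)) := by
      rw [← hφ g (Finsupp.single s 1), Finsupp.mapDomain_single, hgs]
    rw [key, l1_mapDomain _ (MulAction.injective g)]
    have h1 : l1 (φ (Finsupp.single s 1)) ≤ ∑ s ∈ S, l1 (φ (Finsupp.single s 1)) :=
      Finset.single_le_sum (fun _ _ => l1_nonneg _) hsS
    linarith
  refine ⟨C, hCpos, fun x => ?_⟩
  induction x using Finsupp.induction with
  | zero => simp [l1]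
  | single_add a b f ha hb ih =>
    have hsingle : l1 (φ (Finsupp.single a b)) ≤ C * |b| := by
      have : Finsupp.single a b = b • Finsupp.single a (1 : ℚ) := by
        simp [Finsupp.smul_single]
      rw [this, map_smul, l1_smul]
      calc |b| * l1 (φ (Finsupp.single a 1)) ≤ |b| * C :=
            mul_le_mul_of_nonneg_left (hbound a) (abs_nonneg b)
        _ = C * |b| := mul_comm _ _
    calc l1 (φ (Finsupp.single a b + f)) = l1 (φ (Finsupp.single a b) + φ f) := by
          rw [map_add]
      _ ≤ l1 (φ (Finsupp.single a b)) + l1 (φ f) := l1_add_le _ _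
      _ ≤ C * |b| + C * l1 f := add_le_add hsingle ih
      _ = C * (|b| + l1 f) := by ring
      _ = C * l1 (Finsupp.single a b + f) := by rw [l1_single_add a b f ha]
end

section
/- Let Γ be a connected locally finite graph with vertex set V and edge set E, equipped with an orientation, and let δ : Q[E] → Q[V] be the simplicial boundary map and ε : Q[V] → Q the augmentation. Suppose μ ∈ Q[E] is an integral 1-chain (all coefficients in ℤ) with δ(μ) = m(v − u) for vertices u ≠ v and a positive integer m. Then there exists an integral 1-chain ν ∈ Q[E] with δ(ν) = v − u, with ν ⪯ μ (coefficientwise: t_e² ≤ t_e s_e for all e, where ν = ∑ t_e e and μ = ∑ s_e e), and ‖ν‖₁ ≥ dist(u, v), where dist is the combinatorial path metric on Γ. -/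
/-- The simplicial boundary map `δ : ℚ[E] → ℚ[V]` of an oriented graph: an edge `e`
oriented from `src e` to `tgt e` is sent to `tgt e − src e`. -/
noncomputable def boundaryMap {V : Type*} (G : SimpleGraph V)
    (src tgt : G.edgeSet → V) (x : G.edgeSet →₀ ℚ) : V →₀ ℚ :=
  x.sum fun e t => t • (Finsupp.single (tgt e) 1 - Finsupp.single (src e) 1)

/-- From a reflexive-transitive chain one can extract a duplicate-free chain. -/
lemma exists_nodup_chain'_aux {α : Type*} {r : α → α → Prop} {a b : α}
    (h : Relation.ReflTransGen r a b) :
    ∃ l : List α, l.Chain' r ∧ l.head? = some a ∧ l.getLast? = some b ∧ l.Nodup := by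
  induction h using Relation.ReflTransGen.head_induction_on with
  | refl => exact ⟨[b], List.isChain_singleton _, rfl, rfl, by simp⟩
  | @head a c hac hcb ih =>
    obtain ⟨l, hc, hh, hl, hn⟩ := ih
    by_cases ha : a ∈ l
    · obtain ⟨s, t, rfl⟩ := List.append_of_mem ha
      refine ⟨a :: t, hc.suffix ⟨s, rfl⟩, rfl, ?_, hn.sublist (List.IsSuffix.sublist ⟨s, rfl⟩)⟩
      rwa [List.getLast?_append_of_ne_nil _ (by simp)] at hl
    · have hlne : l ≠ [] := by
        intro h0; rw [h0] at hh; simp at hh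
      refine ⟨a :: l, List.isChain_cons.2 ⟨?_, hc⟩, rfl, ?_, List.nodup_cons.2 ⟨ha, hn⟩⟩
      · intro y hy
        rw [hh] at hy
        cases hy
        exact hac
      · rw [show a :: l = [a] ++ l from rfl, List.getLast?_append_of_ne_nil _ hlne]
        exact hl

/-- Lemma 4.9 (Flemming–Martínez-Pedroza type): if an integral 1-chain `μ` has boundary
`m(v − u)`, then there is an integral 1-chain `ν ⪯ μ` with boundary `v − u` and
ℓ1-norm at least `dist(u, v)`. -/
theorem stmt5 {V : Type*} (G : SimpleGraph V) (hconn : G.Connected)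
    (hlf : ∀ v : V, (G.neighborSet v).Finite)
    (src tgt : G.edgeSet → V)
    (hor : ∀ e : G.edgeSet, (e : Sym2 V) = s(src e, tgt e))
    (μ : G.edgeSet →₀ ℚ) (hint : ∀ e, ∃ z : ℤ, μ e = z)
    (u v : V) (huv : u ≠ v) (m : ℕ) (hm : 0 < m)
    (hδμ : boundaryMap G src tgt μ =
      (m : ℚ) • (Finsupp.single v 1 - Finsupp.single u 1)) :
    ∃ ν : G.edgeSet →₀ ℚ,
      (∀ e, ∃ z : ℤ, ν e = z) ∧
      boundaryMap G src tgt ν = Finsupp.single v 1 - Finsupp.single u 1 ∧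
      (∀ e, (ν e) ^ 2 ≤ ν e * μ e) ∧
      (G.dist u v : ℚ) ≤ ν.sum fun _ a => |a| := by
  classical
  have hadj : ∀ e : G.edgeSet, G.Adj (src e) (tgt e) := by
    intro e
    have h2 := e.2
    rw [hor e] at h2
    exact h2
  -- additivity of the boundary map and value on single edges
  have hb_add : ∀ x y : G.edgeSet →₀ ℚ,
      boundaryMap G src tgt (x + y) = boundaryMap G src tgt x + boundaryMap G src tgt y := by
    intro x y
    unfold boundaryMap
    exact Finsupp.sum_add_index' (fun e => zero_smul _ _) (fun e b1 b2 => add_smul _ _ _)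
  have hb_single : ∀ (e : G.edgeSet) (c : ℚ),
      boundaryMap G src tgt (Finsupp.single e c)
        = c • (Finsupp.single (tgt e) 1 - Finsupp.single (src e) 1) := by
    intro e c
    unfold boundaryMap
    exact Finsupp.sum_single_index (zero_smul _ _)
  -- the flow-direction relation
  set R : V → V → Prop := fun a b => ∃ e : G.edgeSet,
    (src e = a ∧ tgt e = b ∧ 0 < μ e) ∨ (src e = b ∧ tgt e = a ∧ μ e < 0) with hRdef
  have hRA : ∀ {a b}, R a b → G.Adj a b := by
    rintro a b ⟨e, he⟩
    rcases he with ⟨h1, h2, _⟩ | ⟨h1, h2, _⟩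
    · rw [← h1, ← h2]; exact hadj e
    · rw [← h1, ← h2]; exact (hadj e).symm
  set S : Set V := {x | Relation.ReflTransGen R u x} with hSdef
  have hSclosed : ∀ {x y}, x ∈ S → R x y → y ∈ S := fun hx hr => hx.tail hr
  have huS : u ∈ S := Relation.ReflTransGen.refl
  set w : V → ℚ := fun a => if a ∈ S then 1 else 0 with hwdef
  -- reachability of v
  have hvS : v ∈ S := by
    by_contra hv
    set φ := Finsupp.linearCombination ℚ w with hφ
    have key : φ (boundaryMap G src tgt μ)
        = μ.sum fun e t => t * (w (tgt e) - w (src e)) := by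
      rw [boundaryMap, map_finsuppSum]
      refine Finsupp.sum_congr fun e _ => ?_
      rw [map_smul, map_sub, Finsupp.linearCombination_single, Finsupp.linearCombination_single]
      simp [smul_eq_mul]
    have hterm : ∀ e ∈ μ.support, 0 ≤ μ e * (w (tgt e) - w (src e)) := by
      intro e _
      rcases lt_trichotomy (μ e) 0 with hlt | heq | hgt
      · by_cases ht : tgt e ∈ S
        · have hs : src e ∈ S := hSclosed ht ⟨e, Or.inr ⟨rfl, rfl, hlt⟩⟩
          simp [hwdef, ht, hs]
        · have hd : w (tgt e) - w (src e) ≤ 0 := by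
            simp only [hwdef, ht, if_false]
            split_ifs <;> norm_num
          nlinarith
      · simp [heq]
      · by_cases hs : src e ∈ S
        · have ht : tgt e ∈ S := hSclosed hs ⟨e, Or.inl ⟨rfl, rfl, hgt⟩⟩
          simp [hwdef, ht, hs]
        · have hd : 0 ≤ w (tgt e) - w (src e) := by
            simp only [hwdef, hs, if_false]
            split_ifs <;> norm_num
          nlinarith
    have h1 : (0:ℚ) ≤ φ (boundaryMap G src tgt μ) := by
      rw [key, Finsupp.sum]
      exact Finset.sum_nonneg hterm
    rw [hδμ, map_smul, map_sub, Finsupp.linearCombination_single,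
      Finsupp.linearCombination_single] at h1
    have hu1 : w u = 1 := by simp [hwdef, huS]
    have hv0 : w v = 0 := by simp [hwdef, hv]
    rw [hu1, hv0] at h1
    have hm' : (0:ℚ) < m := by exact_mod_cast hm
    simp only [smul_eq_mul, one_smul] at h1
    nlinarith
  -- extract a duplicate-free chain from u to v
  obtain ⟨l, hlc, hlh, hll, hln⟩ := exists_nodup_chain'_aux hvS
  obtain ⟨a0, t0, rfl⟩ : ∃ a t, l = a :: t := by
    cases l with
    | nil => simp at hlh
    | cons a t => exact ⟨a, t, rfl⟩
  have ha0 : a0 = u := by simpa using hlh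
  subst ha0
  -- norm additivity for disjointly supported pieces
  have hsum_add : ∀ (ν : G.edgeSet →₀ ℚ) (e0 : G.edgeSet) (c : ℚ), ν e0 = 0 →
      ((ν + Finsupp.single e0 c).sum fun _ a => |a|) = (ν.sum fun _ a => |a|) + |c| := by
    intro ν e0 c h0
    set s := (ν + Finsupp.single e0 c).support ∪ (ν.support ∪ (Finsupp.single e0 c).support)
      with hsdef
    have habs : ∀ e, |(ν + Finsupp.single e0 c) e| = |ν e| + |(Finsupp.single e0 c) e| := by
      intro e
      by_cases he : e = e0
      · subst he; simp [h0]
      · have : (Finsupp.single e0 c) e = 0 := Finsupp.single_eq_of_ne' (Ne.symm he)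
        simp [this]
    have hone : ((Finsupp.single e0 c).sum fun _ a => |a|) = |c| :=
      Finsupp.sum_single_index (abs_zero)
    rw [Finsupp.sum_of_support_subset _ (Finset.subset_union_left) _ (by simp),
      Finsupp.sum_of_support_subset ν
        ((Finset.subset_union_left).trans Finset.subset_union_right) _ (by simp),
      show |c| = (Finsupp.single e0 c).sum fun _ a => |a| from hone.symm,
      Finsupp.sum_of_support_subset (Finsupp.single e0 c)
        ((Finset.subset_union_right).trans Finset.subset_union_right) _ (by simp),
      ← Finset.sum_add_distrib]
    exact Finset.sum_congr rfl fun e _ => habs e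
  -- main induction along the chain
  have key : ∀ (t : List V) (a : V), List.Chain' R (a :: t) → (a :: t).Nodup →
      (a :: t).getLast? = some v →
      ∃ ν : G.edgeSet →₀ ℚ,
        (∀ e, ν e = 0 ∨ (ν e = 1 ∧ 0 < μ e) ∨ (ν e = -1 ∧ μ e < 0)) ∧
        boundaryMap G src tgt ν = Finsupp.single v 1 - Finsupp.single a 1 ∧
        (∀ e, ν e ≠ 0 → src e ∈ (a :: t) ∧ tgt e ∈ (a :: t)) ∧
        (G.dist a v : ℚ) ≤ ν.sum fun _ a => |a| := by
    intro t
    induction t with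
    | nil =>
      intro a _ _ h3
      have hav : a = v := by simpa using h3
      subst hav
      refine ⟨0, by simp, ?_, by simp, ?_⟩
      · unfold boundaryMap
        rw [Finsupp.sum_zero_index, sub_self]
      · simp [SimpleGraph.dist_self]
    | cons b t ih =>
      intro a h1 h2 h3
      have hRab : R a b := (List.isChain_cons_cons.1 h1).1
      have hadjab : G.Adj a b := hRA hRab
      have h1' : List.Chain' R (b :: t) := (List.isChain_cons_cons.1 h1).2
      have hant : a ∉ b :: t := (List.nodup_cons.1 h2).1
      have h2' : (b :: t).Nodup := (List.nodup_cons.1 h2).2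
      have h3' : (b :: t).getLast? = some v := by
        rwa [show a :: b :: t = [a] ++ (b :: t) from rfl,
          List.getLast?_append_of_ne_nil _ (by simp)] at h3
      obtain ⟨ν, htri, hbd, hsupp, hnorm⟩ := ih b h1' h2' h3'
      obtain ⟨e0, he0⟩ := hRab
      -- the new coefficient
      obtain ⟨c, hc1, hc0, hδ0⟩ :
          ∃ c : ℚ, |c| = 1 ∧ (c = 1 ∧ 0 < μ e0 ∨ c = -1 ∧ μ e0 < 0) ∧
            boundaryMap G src tgt (Finsupp.single e0 c)
              = Finsupp.single b 1 - Finsupp.single a 1 := by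
        rcases he0 with ⟨hs, ht, hpos⟩ | ⟨hs, ht, hneg⟩
        · exact ⟨1, by norm_num, Or.inl ⟨rfl, hpos⟩, by rw [hb_single, hs, ht, one_smul]⟩
        · refine ⟨-1, by norm_num, Or.inr ⟨rfl, hneg⟩, ?_⟩
          rw [hb_single, hs, ht, neg_one_smul, neg_sub]
      have hνe0 : ν e0 = 0 := by
        by_contra h0
        obtain ⟨hsrc, htgt⟩ := hsupp e0 h0
        rcases he0 with ⟨hs, _, _⟩ | ⟨_, ht, _⟩
        · rw [hs] at hsrc; exact hant hsrc
        · rw [ht] at htgt; exact hant htgt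
      refine ⟨ν + Finsupp.single e0 c, ?_, ?_, ?_, ?_⟩
      · intro e
        by_cases he : e = e0
        · subst he
          rw [Finsupp.add_apply, hνe0, zero_add, Finsupp.single_eq_same]
          rcases hc0 with ⟨hc, hp⟩ | ⟨hc, hp⟩
          · exact Or.inr (Or.inl ⟨hc, hp⟩)
          · exact Or.inr (Or.inr ⟨hc, hp⟩)
        · rw [Finsupp.add_apply, Finsupp.single_eq_of_ne' (Ne.symm he), add_zero]
          exact htri e
      · rw [hb_add, hbd, hδ0]
        abel
      · intro e he
        by_cases he' : e = e0
        · subst he'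
          rcases he0 with ⟨hs, ht, _⟩ | ⟨hs, ht, _⟩ <;>
            rw [hs, ht] <;>
            exact ⟨by simp, by simp⟩
        · rw [Finsupp.add_apply, Finsupp.single_eq_of_ne' (Ne.symm he'), add_zero] at he
          obtain ⟨hsrc, htgt⟩ := hsupp e he
          exact ⟨List.mem_cons_of_mem _ hsrc, List.mem_cons_of_mem _ htgt⟩
      · rw [hsum_add ν e0 c hνe0, hc1]
        have hd1 : G.dist a b = 1 := SimpleGraph.dist_eq_one_iff_adj.2 hadjab
        have htr : G.dist a v ≤ G.dist a b + G.dist b v := hconn.dist_triangle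
        rw [hd1] at htr
        have : (G.dist a v : ℚ) ≤ (G.dist b v : ℚ) + 1 := by
          have : (G.dist a v : ℚ) ≤ ((1 + G.dist b v : ℕ) : ℚ) := by exact_mod_cast htr
          push_cast at this
          linarith
        linarith
  obtain ⟨ν, htri, hbd, _, hnorm⟩ := key t0 _ hlc hln hll
  refine ⟨ν, ?_, hbd, ?_, hnorm⟩
  · intro e
    rcases htri e with h | ⟨h, _⟩ | ⟨h, _⟩
    · exact ⟨0, by simp [h]⟩
    · exact ⟨1, by simp [h]⟩
    · exact ⟨-1, by simp [h]⟩
  · intro e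
    rcases htri e with h | ⟨h, hp⟩ | ⟨h, hp⟩
    · simp [h]
    · obtain ⟨z, hz⟩ := hint e
      have hz0 : (0:ℤ) < z := by exact_mod_cast hz ▸ hp
      have hz1 : (1:ℚ) ≤ μ e := by
        rw [hz]
        exact_mod_cast (by omega : (1:ℤ) ≤ z)
      rw [h]; nlinarith
    · obtain ⟨z, hz⟩ := hint e
      have hz0 : z < (0:ℤ) := by exact_mod_cast hz ▸ hp
      have hz1 : μ e ≤ -1 := by
        rw [hz]
        exact_mod_cast (by omega : z ≤ (-1:ℤ))
      rw [h]; nlinarith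
end

section
/- Let A ∗_C B be an amalgamated free product. If x₁, …, x_n (n ≥ 1) is a reduced word — that is, each x_i lies in A or B, successive letters lie in different factors, no x_i lies in C when n > 1, and x₁ ≠ 1 when n = 1 — then the product x₁ ⋯ x_n is not the identity element of A ∗_C B. -/
open Monoid

@[reducible] def stmt13G (A B : Type) : Bool → Type := fun b => match b with
  | true => A | false => B

instance stmt13Grp {A B : Type} [Group A] [Group B] : ∀ b, Group (stmt13G A B b) :=
  fun b => match b with | true => ‹Group A› | false => ‹Group B›

@[reducible] def stmt13phi {A B C : Type} [Group A] [Group B] [Group C]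
    (iA : C →* A) (iB : C →* B) : ∀ b, C →* stmt13G A B b :=
  fun b => match b with | true => iA | false => iB

/-- Normal form theorem for amalgamated free products: `P` is the pushout of
`A ← C → B` (with `C` embedding in both factors); a reduced word has nontrivial
product in `P`. Letters are modeled as elements of `A ⊕ B`. -/
theorem stmt13 {A B C P : Type} [Group A] [Group B] [Group C] [Group P]
    (iA : C →* A) (iB : C →* B)
    (hiA : Function.Injective iA) (hiB : Function.Injective iB)
    (jA : A →* P) (jB : B →* P) (hcomm : jA.comp iA = jB.comp iB)
    (huniv : ∀ (Q : Type) [Group Q] (fA : A →* Q) (fB : B →* Q),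
      fA.comp iA = fB.comp iB →
        ∃! f : P →* Q, f.comp jA = fA ∧ f.comp jB = fB)
    (n : ℕ) (hn : 1 ≤ n) (x : Fin n → A ⊕ B)
    (halt : ∀ (i : ℕ) (h : i + 1 < n),
      (x ⟨i, Nat.lt_of_succ_lt h⟩).isLeft ≠ (x ⟨i + 1, h⟩).isLeft)
    (hnotC : 1 < n → ∀ i : Fin n,
      (∀ c : C, x i ≠ Sum.inl (iA c)) ∧ (∀ c : C, x i ≠ Sum.inr (iB c)))
    (hone : n = 1 → ∀ i : Fin n, x i ≠ Sum.inl 1 ∧ x i ≠ Sum.inr 1) :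
    (List.ofFn fun i => Sum.elim (⇑jA) (⇑jB) (x i)).prod ≠ 1 := by
  classical
  let G := stmt13G A B
  let φ := stmt13phi iA iB
  have hφ : ∀ b, Function.Injective (φ b) := fun b => match b with
    | true => hiA | false => hiB
  obtain ⟨f, ⟨hfA, hfB⟩, -⟩ := huniv (PushoutI φ)
    (PushoutI.of (φ := φ) true) (PushoutI.of (φ := φ) false)
    ((PushoutI.of_comp_eq_base (φ := φ) true).trans
      (PushoutI.of_comp_eq_base (φ := φ) false).symm)
  let ℓ : A ⊕ B → Σ b, G b := fun s =>
    Sum.rec (fun a => ⟨true, a⟩) (fun b => ⟨false, b⟩) s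
  have hfst : ∀ s : A ⊕ B, (ℓ s).1 = s.isLeft := by rintro (a | b) <;> rfl
  have hf_letter : ∀ s : A ⊕ B,
      f (Sum.elim (⇑jA) (⇑jB) s) = PushoutI.of (φ := φ) (ℓ s).1 (ℓ s).2 := by
    rintro (a | b)
    · exact DFunLike.congr_fun hfA a
    · exact DFunLike.congr_fun hfB b
  have key1 : ∀ s : A ⊕ B, (∀ c, s ≠ Sum.inl (iA c)) → (∀ c, s ≠ Sum.inr (iB c)) →
      (ℓ s).2 ∉ (φ (ℓ s).1).range := by
    rintro (a | b) h1 h2 ⟨c, hc⟩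
    · exact h1 c (congrArg (Sum.inl : A → A ⊕ B) hc.symm)
    · exact h2 c (congrArg (Sum.inr : B → A ⊕ B) hc.symm)
  have key2 : ∀ s : A ⊕ B, s ≠ Sum.inl 1 → s ≠ Sum.inr 1 → (ℓ s).2 ≠ 1 := by
    rintro (a | b) h1 h2 h
    · exact h1 (congrArg (Sum.inl : A → A ⊕ B) h)
    · exact h2 (congrArg (Sum.inr : B → A ⊕ B) h)
  intro hprod
  have hf1 : (List.ofFn fun i => PushoutI.of (φ := φ) (ℓ (x i)).1 (ℓ (x i)).2).prod = 1 := by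
    have := congrArg f hprod
    rw [map_one, map_list_prod, List.map_ofFn] at this
    rw [← this]
    exact congrArg List.prod (congrArg List.ofFn (funext fun i => (hf_letter (x i)).symm))
  rcases eq_or_lt_of_le hn with h1 | h1
  · -- n = 1
    subst h1
    have hx := hone rfl 0
    simp only [List.ofFn_succ, List.ofFn_zero, List.prod_cons, List.prod_nil, mul_one] at hf1
    have h2 : (ℓ (x 0)).2 ≠ 1 := key2 (x 0) hx.1 hx.2
    exact h2 (PushoutI.of_injective hφ (ℓ (x 0)).1 (by rw [hf1, map_one]))
  · -- n > 1
    have hnC := hnotC h1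
    let w : CoprodI.Word G :=
      { toList := List.ofFn fun i => ℓ (x i)
        ne_one := by
          intro l hl
          rw [List.mem_ofFn] at hl
          obtain ⟨i, rfl⟩ := hl
          have hx := hnC i
          exact key2 (x i) (fun h => hx.1 1 (by rwa [map_one])) (fun h => hx.2 1 (by rwa [map_one]))
        chain_ne := by
          rw [List.isChain_iff_getElem]
          intro k hk
          simp only [List.length_ofFn] at hk
          simp only [List.getElem_ofFn]
          have h := halt k (by omega)
          intro hcontra
          apply h
          rw [← hfst, ← hfst]
          exact hcontra }
    have hred : PushoutI.Reduced φ w := by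
      intro g hg
      rw [List.mem_ofFn] at hg
      obtain ⟨i, rfl⟩ := hg
      exact key1 (x i) (hnC i).1 (hnC i).2
    have hwprod : PushoutI.ofCoprodI (φ := φ) w.prod = 1 := by
      rw [← hf1, CoprodI.Word.prod, map_list_prod]
      show (List.map _ (List.map _ (List.ofFn fun i => ℓ (x i)))).prod = _
      rw [List.map_map, List.map_ofFn]
      congr 1
    have hempty := hred.eq_empty_of_mem_range hφ ⟨1, by rw [map_one, hwprod]⟩
    have hlen := congrArg (fun w => w.toList.length) hempty
    simp [w, CoprodI.Word.empty] at hlen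
    omega
end
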